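/- arXiv:1406.3739 — 2 statements merged into one kernel-verified Lean document; each statement's English description precedes it below -/
import Mathlib

section
/- Let δ : (0,∞) → ℝ be continuous and bounded, and suppose N, L → ∞ with N/L → √E/π for some E > 0. Then (1/L)·Σ_{n=1}^N 2·δ(nπ/L)·(nπ/L) − ( (1/π)·∫_0^{(Nπ/L)²} δ(√x) dx + (1/L)·δ(√E)·√E ) = o(1/L), provided δ is C¹ with bounded derivative and x·δ(x) has bounded second derivative contribution so that the second-order Euler–MacLaurin formula applies. -/
open Real MeasureTheory Set Filter Topology

/-- Integrability of a bounded function continuous on `Ioc a b`. -/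
lemma aux_integrableOn_Ioc {f : ℝ → ℝ} {a b C : ℝ}
    (hc : ContinuousOn f (Set.Ioc a b)) (hC : ∀ x ∈ Set.Ioc a b, |f x| ≤ C) :
    IntegrableOn f (Set.Ioc a b) := by
  refine ⟨hc.aestronglyMeasurable measurableSet_Ioc, ?_⟩
  apply MeasureTheory.HasFiniteIntegral.restrict_of_bounded (C := C) measure_Ioc_lt_top
  filter_upwards [ae_restrict_mem measurableSet_Ioc] with x hx
  simpa using hC x hx

lemma aux_intervalIntegrable {f : ℝ → ℝ} {a b C : ℝ} (hab : a ≤ b)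
    (hc : ContinuousOn f (Set.Ioc a b)) (hC : ∀ x ∈ Set.Ioc a b, |f x| ≤ C) :
    IntervalIntegrable f volume a b := by
  rw [intervalIntegrable_iff_integrableOn_Ioc_of_le hab]
  exact aux_integrableOn_Ioc hc hC

/-- Abstract telescoping identity for trapezoid sums. -/
lemma aux_sum_trapezoid (x : ℕ → ℝ) (m : ℕ) :
    ∑ k ∈ Finset.range m, (x k + x (k + 1)) / 2
      = (∑ k ∈ Finset.range (m + 1), x k) - x 0 / 2 - x m / 2 := by
  induction m with
  | zero => simp only [Finset.sum_range_zero, zero_add, Finset.sum_range_one]; ring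
  | succ n ih =>
    rw [Finset.sum_range_succ, ih, Finset.sum_range_succ (n := n + 1)]
    ring

/-- Trapezoid rule error estimate on a single interval. -/
lemma aux_trapezoid_abs (f f' f'' : ℝ → ℝ) (a b C : ℝ) (hab : a ≤ b)
    (h1 : ∀ x ∈ Set.Icc a b, HasDerivAt f (f' x) x)
    (h2 : ∀ x ∈ Set.Icc a b, HasDerivAt f' (f'' x) x)
    (hi' : IntervalIntegrable f' volume a b)
    (hi : IntervalIntegrable f'' volume a b)
    (hC : ∀ x ∈ Set.Icc a b, |f'' x| ≤ C) :
    |(∫ t in a..b, f t) - (b - a) * (f a + f b) / 2| ≤ C * (b - a) ^ 3 / 8 := by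
  have huIcc : Set.uIcc a b = Set.Icc a b := Set.uIcc_of_le hab
  have key1 : ∫ t in a..b, f t * (fun _ : ℝ => (1:ℝ)) t
      = f b * (b - (a + b) / 2) - f a * (a - (a + b) / 2)
        - ∫ t in a..b, f' t * (t - (a + b) / 2) := by
    exact intervalIntegral.integral_mul_deriv_eq_deriv_mul
      (u := f) (v := fun t => t - (a + b) / 2) (u' := f') (v' := fun _ => (1:ℝ))
      (fun x hx => h1 x (huIcc ▸ hx))
      (fun x _ => (hasDerivAt_id x).sub_const _)
      hi' intervalIntegrable_const
  have key2 : ∫ t in a..b, f' t * (fun t => t - (a + b) / 2) t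
      = f' b * ((b - a) * (b - b) / 2) - f' a * ((a - a) * (a - b) / 2)
        - ∫ t in a..b, f'' t * ((t - a) * (t - b) / 2) := by
    refine intervalIntegral.integral_mul_deriv_eq_deriv_mul
      (u := f') (v := fun t => (t - a) * (t - b) / 2) (u' := f'')
      (v' := fun t => t - (a + b) / 2)
      (fun x hx => h2 x (huIcc ▸ hx)) (fun x _ => ?_) hi
      ((continuous_id.sub continuous_const).intervalIntegrable _ _)
    have h := (((hasDerivAt_id x).sub_const a).mul ((hasDerivAt_id x).sub_const b)).div_const 2
    refine h.congr_deriv ?_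
    simp only [id_eq]
    ring
  simp only [mul_one] at key1
  have iden : (∫ t in a..b, f t) - (b - a) * (f a + f b) / 2
      = ∫ t in a..b, f'' t * ((t - a) * (t - b) / 2) := by
    rw [key2] at key1
    linear_combination key1
  rw [iden]
  have hC0 : 0 ≤ C := le_trans (abs_nonneg _) (hC a ⟨le_refl a, hab⟩)
  have hb : ∀ x ∈ Set.uIoc a b, ‖f'' x * ((x - a) * (x - b) / 2)‖ ≤ C * (b - a) ^ 2 / 8 := by
    intro x hx
    rw [Set.uIoc_of_le hab] at hx
    have hxI : x ∈ Set.Icc a b := ⟨le_of_lt hx.1, hx.2⟩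
    rw [Real.norm_eq_abs, abs_mul]
    have h1' : |f'' x| ≤ C := hC x hxI
    have h2' : |(x - a) * (x - b) / 2| ≤ (b - a) ^ 2 / 8 := by
      rw [abs_le]
      constructor <;> nlinarith [hxI.1, hxI.2, sq_nonneg (a + b - 2 * x), sq_nonneg (x - a), sq_nonneg (x - b)]
    calc |f'' x| * |(x - a) * (x - b) / 2| ≤ C * ((b - a) ^ 2 / 8) :=
          mul_le_mul h1' h2' (abs_nonneg _) hC0
      _ = C * (b - a) ^ 2 / 8 := by ring
  have := intervalIntegral.norm_integral_le_of_norm_le_const hb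
  rw [Real.norm_eq_abs] at this
  calc |∫ t in a..b, f'' t * ((t - a) * (t - b) / 2)| ≤ C * (b - a) ^ 2 / 8 * |b - a| := this
    _ = C * (b - a) ^ 3 / 8 := by rw [abs_of_nonneg (by linarith)]; ring

lemma aux_integrableOn_Ioc' {f : ℝ → ℝ} {a b C : ℝ}
    (hc : ContinuousOn f (Set.Ioc a b)) (hC : ∀ x ∈ Set.Ioc a b, |f x| ≤ C) :
    IntegrableOn f (Set.Ioc a b) := by
  refine ⟨hc.aestronglyMeasurable measurableSet_Ioc, ?_⟩
  apply MeasureTheory.HasFiniteIntegral.restrict_of_bounded (C := C) measure_Ioc_lt_top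
  filter_upwards [ae_restrict_mem measurableSet_Ioc] with x hx
  simpa using hC x hx

/-- Substitution `x = u²` in the integral of `δ ∘ √`. -/
lemma aux_subst (δ : ℝ → ℝ) (Mδ : ℝ) (hcont : ContinuousOn δ (Set.Ioi 0))
    (hδb : ∀ x > (0 : ℝ), |δ x| ≤ Mδ) (b : ℝ) (hb : 0 < b) :
    (∫ x in (0:ℝ)..(b ^ 2), δ (Real.sqrt x)) = ∫ u in (0:ℝ)..b, 2 * δ u * u := by
  have hsq : ContinuousOn (fun x : ℝ => δ (Real.sqrt x)) (Set.Ioi 0) := by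
    apply hcont.comp Real.continuous_sqrt.continuousOn
    intro x hx
    exact Real.sqrt_pos.2 hx
  have hMδ0 : 0 ≤ Mδ := le_trans (abs_nonneg _) (hδb 1 one_pos)
  have himg1 : (fun x : ℝ => x ^ 2) '' Set.Icc 0 b ⊆ Set.Icc 0 (b ^ 2) := by
    rintro y ⟨x, hx, rfl⟩
    exact ⟨pow_nonneg hx.1 2, pow_le_pow_left₀ hx.1 hx.2 2⟩
  have himg2 : (fun x : ℝ => x ^ 2) '' Set.Ioo (min 0 b) (max 0 b) ⊆ Set.Ioi 0 := by
    rintro y ⟨x, hx, rfl⟩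
    rw [min_eq_left hb.le] at hx
    exact pow_pos hx.1 2
  have key : (∫ x in (0:ℝ)..b, (2 * x) • ((fun y => δ (Real.sqrt y)) ∘ (fun x => x ^ 2)) x)
      = ∫ u in ((0:ℝ) ^ 2)..(b ^ 2), δ (Real.sqrt u) := by
    apply intervalIntegral.integral_comp_smul_deriv''' (f := fun x : ℝ => x ^ 2)
      (f' := fun x => 2 * x)
    · exact (continuous_pow 2).continuousOn
    · intro x _
      have h := (hasDerivAt_pow 2 x).hasDerivWithinAt (s := Set.Ioi x)
      refine h.congr_deriv ?_
      norm_num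
    · exact hsq.mono himg2
    · have hint : IntegrableOn (fun y => δ (Real.sqrt y)) (Set.Icc 0 (b ^ 2)) := by
        rw [integrableOn_Icc_iff_integrableOn_Ioc]
        exact aux_integrableOn_Ioc' (hsq.mono Set.Ioc_subset_Ioi_self)
          (fun x hx => hδb _ (Real.sqrt_pos.2 hx.1))
      apply hint.mono_set
      rw [Set.uIcc_of_le hb.le]
      exact himg1
    · rw [Set.uIcc_of_le hb.le, integrableOn_Icc_iff_integrableOn_Ioc]
      apply aux_integrableOn_Ioc' (C := 2 * b * Mδ)
      · apply ContinuousOn.smul (f := fun x : ℝ => 2 * x) (by fun_prop)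
        apply hsq.comp (continuous_pow 2).continuousOn
        intro x hx
        exact pow_pos hx.1 2
      · intro x hx
        have h1 : |δ (Real.sqrt (x ^ 2))| ≤ Mδ := hδb _ (Real.sqrt_pos.2 (pow_pos hx.1 2))
        have hx0 : 0 < x := hx.1
        have hxb : x ≤ b := hx.2
        rw [smul_eq_mul, abs_mul, abs_mul]
        calc |2| * |x| * |δ (Real.sqrt (x ^ 2))| ≤ 2 * b * Mδ := by
              rw [abs_two, abs_of_pos hx0]
              apply mul_le_mul _ h1 (abs_nonneg _) (by positivity)
              nlinarith
          _ = 2 * b * Mδ := rfl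
  rw [show ((0:ℝ) ^ 2) = 0 by norm_num] at key
  rw [← key]
  apply intervalIntegral.integral_congr
  intro x hx
  rw [Set.uIcc_of_le hb.le] at hx
  simp only [Function.comp_apply, smul_eq_mul, Real.sqrt_sq hx.1]
  ring

section gfacts

variable (δ δ' δ'' : ℝ → ℝ) (Mδ M : ℝ)

/-- derivative of g -/
lemma aux_hg1 (hd1 : ∀ x > (0:ℝ), HasDerivAt δ (δ' x) x) :
    ∀ y > (0:ℝ), HasDerivAt (fun z => 2 * δ z * z) (2 * δ' y * y + 2 * δ y) y := by
  intro y hy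
  have h1 := ((hd1 y hy).const_mul 2).mul (hasDerivAt_id' (x := y))
  refine h1.congr_deriv ?_
  ring

/-- derivative of g' -/
lemma aux_hg2 (hd1 : ∀ x > (0:ℝ), HasDerivAt δ (δ' x) x)
    (hd2 : ∀ x > (0:ℝ), HasDerivAt δ' (δ'' x) x) :
    ∀ y > (0:ℝ), HasDerivAt (fun z => 2 * δ' z * z + 2 * δ z)
      (2 * δ'' y * y + 4 * δ' y) y := by
  intro y hy
  have h1 := (((hd2 y hy).const_mul 2).mul (hasDerivAt_id' (x := y))).add
    ((hd1 y hy).const_mul 2)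
  refine h1.congr_deriv ?_
  ring

lemma aux_hg2b (hM : ∀ x > (0:ℝ), |2 * δ' x + x * δ'' x| ≤ M) :
    ∀ y > (0:ℝ), |2 * δ'' y * y + 4 * δ' y| ≤ 2 * M := by
  intro y hy
  have h := hM y hy
  have e : 2 * δ'' y * y + 4 * δ' y = 2 * (2 * δ' y + y * δ'' y) := by ring
  rw [e, abs_mul, abs_two]
  linarith [abs_nonneg (2 * δ' y + y * δ'' y)]

/-- Trapezoid estimate for `g` on `[a,b] ⊆ (0,∞)`. -/
lemma aux_g_trap (hcont : ContinuousOn δ (Set.Ioi 0))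
    (hd1 : ∀ x > (0:ℝ), HasDerivAt δ (δ' x) x)
    (hd2 : ∀ x > (0:ℝ), HasDerivAt δ' (δ'' x) x)
    (hM : ∀ x > (0:ℝ), |2 * δ' x + x * δ'' x| ≤ M)
    (a b : ℝ) (ha : 0 < a) (hab : a ≤ b) :
    |(∫ t in a..b, 2 * δ t * t)
        - (b - a) * (2 * δ a * a + 2 * δ b * b) / 2| ≤ 2 * M * (b - a) ^ 3 / 8 := by
  have hsub : Set.Icc a b ⊆ Set.Ioi 0 := fun y hy => lt_of_lt_of_le ha hy.1
  have hsub' : Set.Ioc a b ⊆ Set.Ioi 0 := fun y hy => lt_of_lt_of_le ha hy.1.le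
  have contδ' : ContinuousOn δ' (Set.Ioi 0) :=
    fun y hy => (hd2 y hy).continuousAt.continuousWithinAt
  have hi' : IntervalIntegrable (fun z => 2 * δ' z * z + 2 * δ z) volume a b := by
    apply ContinuousOn.intervalIntegrable
    rw [Set.uIcc_of_le hab]
    exact ((continuousOn_const.mul (contδ'.mono hsub)).mul continuousOn_id).add
      (continuousOn_const.mul (hcont.mono hsub))
  have hi : IntervalIntegrable (fun z => 2 * δ'' z * z + 4 * δ' z) volume a b := by
    rw [intervalIntegrable_iff_integrableOn_Ioc_of_le hab]
    constructor
    · have hφ : AEStronglyMeasurable (fun y => 2 * deriv δ' y * y + 4 * δ' y)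
          (volume.restrict (Set.Ioc a b)) := by
        apply AEStronglyMeasurable.add
        · exact (((measurable_deriv δ').const_mul 2).mul measurable_id).aestronglyMeasurable
        · exact ((contδ'.mono hsub').aestronglyMeasurable measurableSet_Ioc).const_mul 4
      apply hφ.congr
      filter_upwards [ae_restrict_mem measurableSet_Ioc] with y hy
      rw [(hd2 y (hsub' hy)).deriv]
    · apply MeasureTheory.HasFiniteIntegral.restrict_of_bounded (C := 2 * M) measure_Ioc_lt_top
      filter_upwards [ae_restrict_mem measurableSet_Ioc] with y hy
      simpa using aux_hg2b δ' δ'' M hM y (hsub' hy)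
  exact aux_trapezoid_abs (fun z => 2 * δ z * z) (fun z => 2 * δ' z * z + 2 * δ z)
    (fun z => 2 * δ'' z * z + 4 * δ' z) a b (2 * M) hab
    (fun y hy => aux_hg1 δ δ' hd1 y (hsub hy))
    (fun y hy => aux_hg2 δ δ' δ'' hd1 hd2 y (hsub hy))
    hi' hi (fun y hy => aux_hg2b δ' δ'' M hM y (hsub hy))

end gfacts
lemma aux_intervalIntegrable_g (δ : ℝ → ℝ) (Mδ : ℝ)
    (hcont : ContinuousOn δ (Set.Ioi 0)) (hδb : ∀ x > (0:ℝ), |δ x| ≤ Mδ)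
    (a b : ℝ) (ha : 0 ≤ a) (hab : a ≤ b) :
    IntervalIntegrable (fun z => 2 * δ z * z) volume a b := by
  have hMδ0 : 0 ≤ Mδ := le_trans (abs_nonneg _) (hδb 1 one_pos)
  rw [intervalIntegrable_iff_integrableOn_Ioc_of_le hab]
  apply aux_integrableOn_Ioc (C := 2 * Mδ * b)
  · have hsub : Set.Ioc a b ⊆ Set.Ioi 0 := fun y hy => lt_of_le_of_lt ha hy.1
    exact (continuousOn_const.mul (hcont.mono hsub)).mul continuousOn_id
  · intro x hx
    have hx0 : 0 < x := lt_of_le_of_lt ha hx.1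
    have h1 : |δ x| ≤ Mδ := hδb x hx0
    rw [abs_mul, abs_mul, abs_two, abs_of_pos hx0]
    calc 2 * |δ x| * x ≤ 2 * Mδ * b := by
          apply mul_le_mul _ hx.2 hx0.le (by positivity)
          linarith
      _ = 2 * Mδ * b := rfl

/-- Main sum estimate (Euler–Maclaurin to second order). -/
lemma aux_sum_est (δ δ' δ'' : ℝ → ℝ) (Mδ M : ℝ)
    (hcont : ContinuousOn δ (Set.Ioi 0))
    (hδb : ∀ x > (0:ℝ), |δ x| ≤ Mδ)
    (hd1 : ∀ x > (0:ℝ), HasDerivAt δ (δ' x) x)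
    (hd2 : ∀ x > (0:ℝ), HasDerivAt δ' (δ'' x) x)
    (hM : ∀ x > (0:ℝ), |2 * δ' x + x * δ'' x| ≤ M)
    (Nn : ℕ) (hNn : 1 ≤ Nn) (h : ℝ) (hh : 0 < h) :
    |(∑ n ∈ Finset.Icc 1 Nn, 2 * δ ((n:ℝ) * h) * ((n:ℝ) * h))
        - δ ((Nn:ℝ) * h) * ((Nn:ℝ) * h)
        - (1 / h) * ∫ u in (0:ℝ)..((Nn:ℝ) * h), 2 * δ u * u|
      ≤ M * (Nn:ℝ) * h ^ 2 / 4 + 3 * Mδ * h := by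
  have hMδ0 : 0 ≤ Mδ := le_trans (abs_nonneg _) (hδb 1 one_pos)
  have hM0 : 0 ≤ M := le_trans (abs_nonneg _) (hM 1 one_pos)
  set g : ℝ → ℝ := fun z => 2 * δ z * z with hg
  set A : ℕ → ℝ := fun k => ((k:ℝ) + 1) * h with hA
  set m : ℕ := Nn - 1 with hm
  have hmN : m + 1 = Nn := Nat.sub_add_cancel hNn
  have hA0 : A 0 = h := by simp [hA]
  have hAm : A m = (Nn:ℝ) * h := by
    have hc : ((m:ℝ) + 1) = (Nn:ℝ) := by
      rw [hm, Nat.cast_sub hNn]; push_cast; ring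
    show ((m:ℝ) + 1) * h = (Nn:ℝ) * h
    rw [hc]
  have hApos : ∀ k : ℕ, 0 < A k := by
    intro k
    rw [hA]
    positivity
  have hAle : ∀ k : ℕ, A k ≤ A (k + 1) := by
    intro k
    rw [hA]
    have : ((k:ℝ) + 1) ≤ ((k:ℝ) + 1 + 1) := by linarith
    push_cast
    nlinarith
  -- sum over Icc equals sum over range of g ∘ A
  have e2 : (∑ n ∈ Finset.Icc 1 Nn, 2 * δ ((n:ℝ) * h) * ((n:ℝ) * h))
      = ∑ k ∈ Finset.range (m + 1), g (A k) := by
    rw [hmN, ← Finset.Ico_add_one_right_eq_Icc, Finset.sum_Ico_eq_sum_range]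
    apply Finset.sum_congr (by norm_num)
    intro k _
    show _ = 2 * δ (((k:ℝ) + 1) * h) * (((k:ℝ) + 1) * h)
    push_cast
    ring_nf
  -- adjacent interval sums
  have hint : ∀ k, IntervalIntegrable g volume (A k) (A (k + 1)) :=
    fun k => aux_intervalIntegrable_g δ Mδ hcont hδb _ _ (hApos k).le (hAle k)
  have e5 : ∑ k ∈ Finset.range m, ∫ t in A k..A (k + 1), g t
      = ∫ t in h..((Nn:ℝ) * h), g t := by
    have e5' := intervalIntegral.sum_integral_adjacent_intervals (μ := volume) (f := g)
      (a := A) (n := m) (fun k _ => hint k)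
    rw [hA0, hAm] at e5'
    exact e5'
  have hT : IntervalIntegrable g volume 0 h :=
    aux_intervalIntegrable_g δ Mδ hcont hδb 0 h le_rfl hh.le
  have hNh : h ≤ (Nn:ℝ) * h := by
    have : (1:ℝ) ≤ (Nn:ℝ) := by exact_mod_cast hNn
    nlinarith
  have hRest : IntervalIntegrable g volume h ((Nn:ℝ) * h) :=
    aux_intervalIntegrable_g δ Mδ hcont hδb _ _ hh.le hNh
  have e6 : (∫ u in (0:ℝ)..((Nn:ℝ) * h), g u)
      = (∫ u in (0:ℝ)..h, g u) + ∫ u in h..((Nn:ℝ) * h), g u :=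
    (intervalIntegral.integral_add_adjacent_intervals hT hRest).symm
  -- trapezoid sum identity
  have e1 := aux_sum_trapezoid (fun k => g (A k)) m
  -- per-interval error
  have htrap : ∀ k : ℕ, |(∫ t in A k..A (k + 1), g t) - h * (g (A k) + g (A (k + 1))) / 2|
      ≤ 2 * M * h ^ 3 / 8 := by
    intro k
    have hd : A (k + 1) - A k = h := by rw [hA]; push_cast; ring
    have := aux_g_trap δ δ' δ'' M hcont hd1 hd2 hM (A k) (A (k + 1)) (hApos k) (hAle k)
    rw [hd] at this
    exact this
  set E : ℝ := ∑ k ∈ Finset.range m,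
    ((∫ t in A k..A (k + 1), g t) - h * (g (A k) + g (A (k + 1))) / 2) with hE
  have hEsum : E = (∫ t in h..((Nn:ℝ) * h), g t)
      - h * ((∑ k ∈ Finset.range (m + 1), g (A k)) - g (A 0) / 2 - g (A m) / 2) := by
    rw [hE, Finset.sum_sub_distrib, e5]
    congr 1
    rw [← e1, Finset.mul_sum]
    apply Finset.sum_congr rfl
    intro k _
    ring
  -- main identity
  have hID : (∑ n ∈ Finset.Icc 1 Nn, 2 * δ ((n:ℝ) * h) * ((n:ℝ) * h))
      - δ ((Nn:ℝ) * h) * ((Nn:ℝ) * h) - (1 / h) * ∫ u in (0:ℝ)..((Nn:ℝ) * h), g u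
      = g h / 2 - (1 / h) * (∫ u in (0:ℝ)..h, g u) - (1 / h) * E := by
    have hgN : δ ((Nn:ℝ) * h) * ((Nn:ℝ) * h) = g ((Nn:ℝ) * h) / 2 := by rw [hg]; ring
    rw [e2, hgN, e6, hEsum, hA0, hAm]
    field_simp
    ring
  rw [hID]
  -- bounds
  have t1 : |g h / 2| ≤ Mδ * h := by
    rw [hg, abs_div, abs_mul, abs_mul, abs_two, abs_of_pos hh]
    have := hδb h hh
    have h2 : |(2:ℝ)| = 2 := by norm_num
    nlinarith
  have t2 : |(1 / h) * (∫ u in (0:ℝ)..h, g u)| ≤ 2 * Mδ * h := by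
    have hb : ∀ x ∈ Set.uIoc (0:ℝ) h, ‖g x‖ ≤ 2 * Mδ * h := by
      intro x hx
      rw [Set.uIoc_of_le hh.le] at hx
      rw [Real.norm_eq_abs, hg]
      have h1 := hδb x hx.1
      rw [abs_mul, abs_mul, abs_two, abs_of_pos hx.1]
      nlinarith [hx.2, hx.1]
    have := intervalIntegral.norm_integral_le_of_norm_le_const hb
    rw [Real.norm_eq_abs] at this
    rw [abs_mul, abs_of_pos (by positivity : (0:ℝ) < 1 / h)]
    calc (1 / h) * |∫ u in (0:ℝ)..h, g u| ≤ (1 / h) * (2 * Mδ * h * |h - 0|) := by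
          apply mul_le_mul_of_nonneg_left this (by positivity)
      _ = 2 * Mδ * h := by
          rw [sub_zero, abs_of_pos hh]
          field_simp
  have t3 : |(1 / h) * E| ≤ M * (Nn:ℝ) * h ^ 2 / 4 := by
    have hEb : |E| ≤ (m:ℝ) * (2 * M * h ^ 3 / 8) := by
      rw [hE]
      apply (Finset.abs_sum_le_sum_abs _ _).trans
      have := Finset.sum_le_card_nsmul (Finset.range m)
        (fun k => |(∫ t in A k..A (k + 1), g t) - h * (g (A k) + g (A (k + 1))) / 2|)
        (2 * M * h ^ 3 / 8) (fun k _ => htrap k)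
      simpa [Finset.card_range, nsmul_eq_mul] using this
    have hmle : (m:ℝ) ≤ (Nn:ℝ) := by exact_mod_cast Nat.sub_le Nn 1
    rw [abs_mul, abs_of_pos (by positivity : (0:ℝ) < 1 / h)]
    calc (1 / h) * |E| ≤ (1 / h) * ((m:ℝ) * (2 * M * h ^ 3 / 8)) :=
          mul_le_mul_of_nonneg_left hEb (by positivity)
      _ ≤ (1 / h) * ((Nn:ℝ) * (2 * M * h ^ 3 / 8)) := by
          apply mul_le_mul_of_nonneg_left _ (by positivity)
          apply mul_le_mul_of_nonneg_right hmle (by positivity)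
      _ = M * (Nn:ℝ) * h ^ 2 / 4 := by field_simp; ring
  calc |g h / 2 - (1 / h) * (∫ u in (0:ℝ)..h, g u) - (1 / h) * E|
      ≤ |g h / 2 - (1 / h) * (∫ u in (0:ℝ)..h, g u)| + |(1 / h) * E| := abs_sub _ _
    _ ≤ (|g h / 2| + |(1 / h) * (∫ u in (0:ℝ)..h, g u)|) + |(1 / h) * E| :=
        add_le_add_left (abs_sub _ _) _
    _ ≤ (Mδ * h + 2 * Mδ * h) + M * (Nn:ℝ) * h ^ 2 / 4 :=
        add_le_add (add_le_add t1 t2) t3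
    _ = M * (Nn:ℝ) * h ^ 2 / 4 + 3 * Mδ * h := by ring
/-- Asymptotics of the sum `(1/L)Σ 2δ(nπ/L)(nπ/L)`: it equals
`(1/π)∫_0^{(Nπ/L)²} δ(√x) dx + (1/L)δ(√E)√E` up to `o(1/L)` as `N, L → ∞` with
`N/L → √E/π`. -/
theorem sum_two_delta_asymptotics (δ δ' δ'' : ℝ → ℝ) (E : ℝ) (hE : 0 < E)
    (hcont : ContinuousOn δ (Set.Ioi 0)) (Mδ Mδ' M : ℝ)
    (hδb : ∀ x > (0 : ℝ), |δ x| ≤ Mδ)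
    (hd1 : ∀ x > (0 : ℝ), HasDerivAt δ (δ' x) x)
    (hδ'b : ∀ x > (0 : ℝ), |δ' x| ≤ Mδ')
    (hd2 : ∀ x > (0 : ℝ), HasDerivAt δ' (δ'' x) x)
    (hM : ∀ x > (0 : ℝ), |2 * δ' x + x * δ'' x| ≤ M)
    (N : ℕ → ℕ) (L : ℕ → ℝ)
    (hN : Tendsto N atTop atTop) (hL : Tendsto L atTop atTop)
    (hNL : Tendsto (fun j => (N j : ℝ) / L j) atTop (𝓝 (Real.sqrt E / π))) :
    Tendsto (fun j => L j *
        ((1 / L j) * ∑ n ∈ Finset.Icc 1 (N j), 2 * δ ((n : ℝ) * π / L j) * ((n : ℝ) * π / L j)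
          - ((1 / π) * (∫ x in (0 : ℝ)..(((N j : ℝ) * π / L j) ^ 2), δ (Real.sqrt x))
            + (1 / L j) * δ (Real.sqrt E) * Real.sqrt E)))
      atTop (𝓝 0) := by
  have hπ : (0:ℝ) < π := Real.pi_pos
  have hsqE : 0 < Real.sqrt E := Real.sqrt_pos.2 hE
  set D : ℕ → ℝ := fun j =>
    (∑ n ∈ Finset.Icc 1 (N j), 2 * δ ((n:ℝ) * (π / L j)) * ((n:ℝ) * (π / L j)))
      - δ ((N j:ℝ) * (π / L j)) * ((N j:ℝ) * (π / L j))
      - (1 / (π / L j)) * ∫ u in (0:ℝ)..((N j:ℝ) * (π / L j)), 2 * δ u * u with hD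
  set Cc : ℕ → ℝ := fun j =>
    δ ((N j:ℝ) * (π / L j)) * ((N j:ℝ) * (π / L j)) - δ (Real.sqrt E) * Real.sqrt E with hCc
  have hev : ∀ᶠ j in atTop, 0 < L j ∧ 1 ≤ N j :=
    (hL.eventually_gt_atTop 0).and (hN.eventually_ge_atTop 1)
  -- `D → 0` by squeezing
  have hDb : ∀ᶠ j in atTop,
      ‖D j‖ ≤ M * (N j:ℝ) * (π / L j) ^ 2 / 4 + 3 * Mδ * (π / L j) := by
    filter_upwards [hev] with j hj
    rw [Real.norm_eq_abs]
    exact aux_sum_est δ δ' δ'' Mδ M hcont hδb hd1 hd2 hM (N j) hj.2 (π / L j)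
      (div_pos hπ hj.1)
  have hB : Tendsto (fun j => M * (N j:ℝ) * (π / L j) ^ 2 / 4 + 3 * Mδ * (π / L j))
      atTop (𝓝 0) := by
    have h2 : Tendsto (fun j => (L j)⁻¹) atTop (𝓝 0) := hL.inv_tendsto_atTop
    have h1 : Tendsto (fun j => (N j : ℝ) / L j * (L j)⁻¹) atTop (𝓝 (Real.sqrt E / π * 0)) :=
      hNL.mul h2
    rw [mul_zero] at h1
    have h3 : Tendsto (fun j => (M * π ^ 2 / 4) * ((N j:ℝ) / L j * (L j)⁻¹)
        + (3 * Mδ * π) * (L j)⁻¹) atTop (𝓝 ((M * π ^ 2 / 4) * 0 + (3 * Mδ * π) * 0)) :=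
      (h1.const_mul _).add (h2.const_mul _)
    simp only [mul_zero, add_zero] at h3
    exact h3.congr (fun j => by ring)
  have hDt : Tendsto D atTop (𝓝 0) := squeeze_zero_norm' hDb hB
  -- `Cc → 0` by continuity
  have hb : Tendsto (fun j => (N j:ℝ) * (π / L j)) atTop (𝓝 (Real.sqrt E)) := by
    have h := hNL.mul_const π
    rw [div_mul_cancel₀ _ (ne_of_gt hπ)] at h
    exact h.congr (fun j => by ring)
  have hψ : ContinuousAt (fun x => δ x * x) (Real.sqrt E) :=
    (hcont.continuousAt (Ioi_mem_nhds hsqE)).mul continuousAt_id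
  have hCt : Tendsto Cc atTop (𝓝 0) := by
    have h := (hψ.tendsto.comp hb).sub_const (δ (Real.sqrt E) * Real.sqrt E)
    rw [sub_self] at h
    exact h.congr (fun j => rfl)
  -- eventual equality of the target with `D + Cc`
  have heq : (fun j => D j + Cc j) =ᶠ[atTop] (fun j => L j *
      ((1 / L j) * ∑ n ∈ Finset.Icc 1 (N j), 2 * δ ((n : ℝ) * π / L j) * ((n : ℝ) * π / L j)
        - ((1 / π) * (∫ x in (0 : ℝ)..(((N j : ℝ) * π / L j) ^ 2), δ (Real.sqrt x))
          + (1 / L j) * δ (Real.sqrt E) * Real.sqrt E))) := by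
    filter_upwards [hev] with j hj
    obtain ⟨hLj, hNj⟩ := hj
    have hNj' : (1:ℝ) ≤ (N j:ℝ) := by exact_mod_cast hNj
    have hbj : 0 < (N j:ℝ) * π / L j :=
      div_pos (mul_pos (lt_of_lt_of_le one_pos hNj') hπ) hLj
    have hsub := aux_subst δ Mδ hcont hδb ((N j:ℝ) * π / L j) hbj
    rw [hsub]
    simp only [hD, hCc, mul_div_assoc]
    field_simp
    simp only [mul_comm, mul_left_comm, mul_assoc]
    ring
  have hfin := (hDt.add hCt).congr' heq
  rwa [add_zero] at hfin
end

section
/- Let δ : (0,∞) → ℝ be C¹ with δ and δ' bounded, and let N, L → ∞ with N/L → √E/π. Then Σ_{n=1}^N (2/L²)·δ'(nπ/L)·δ(nπ/L)·(nπ/L) = (1/(Lπ))·( δ²(√E)·√E − π·∫_0^{N/L} δ²(xπ) dx ) + o(1/L). -/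
open Real MeasureTheory Set Filter Topology


namespace SDPDA

noncomputable def gfun (δ δ' : ℝ → ℝ) : ℝ → ℝ := fun x => 2 * δ' (x * π) * δ (x * π) * (x * π)

lemma gfun_apply (δ δ' : ℝ → ℝ) (x : ℝ) :
    gfun δ δ' x = 2 * δ' (x * π) * δ (x * π) * (x * π) := rfl

variable {δ δ' : ℝ → ℝ} {Mδ Mδ' : ℝ}

lemma contAt_comp (hd1 : ∀ x > (0:ℝ), HasDerivAt δ (δ' x) x) {x : ℝ} (hx : 0 < x) :
    ContinuousAt (fun y => δ (y * π)) x := by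
  have hπx : 0 < x * π := mul_pos hx pi_pos
  exact ContinuousAt.comp (hd1 _ hπx).continuousAt (continuous_mul_right π).continuousAt

lemma contAt_comp' (hc : ContinuousOn δ' (Set.Ioi 0)) {x : ℝ} (hx : 0 < x) :
    ContinuousAt (fun y => δ' (y * π)) x := by
  have hπx : 0 < x * π := mul_pos hx pi_pos
  exact ContinuousAt.comp (hc.continuousAt (Ioi_mem_nhds hπx)) (continuous_mul_right π).continuousAt

lemma cont_g (hd1 : ∀ x > (0:ℝ), HasDerivAt δ (δ' x) x)
    (hc : ContinuousOn δ' (Set.Ioi 0))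
    (hδb : ∀ x > (0:ℝ), |δ x| ≤ Mδ) (hδ'b : ∀ x > (0:ℝ), |δ' x| ≤ Mδ') :
    ContinuousOn (gfun δ δ') (Ici 0) := by
  unfold gfun
  have hM : 0 ≤ Mδ := le_trans (abs_nonneg _) (hδb 1 one_pos)
  have hM' : 0 ≤ Mδ' := le_trans (abs_nonneg _) (hδ'b 1 one_pos)
  intro x hx
  rcases eq_or_lt_of_le (Set.mem_Ici.mp hx) with h0 | h0
  · -- x = 0 : squeeze
    subst h0
    have hg0 : (fun x => 2 * δ' (x * π) * δ (x * π) * (x * π)) 0 = 0 := by simp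
    unfold ContinuousWithinAt
    rw [hg0]
    have hb : ∀ᶠ y in 𝓝[Ici 0] (0:ℝ), ‖2 * δ' (y * π) * δ (y * π) * (y * π)‖ ≤ 2 * Mδ' * Mδ * (y * π) := by
      filter_upwards [eventually_mem_nhdsWithin] with y hy
      rcases eq_or_lt_of_le (Set.mem_Ici.mp hy) with h1 | h1
      · subst h1; simp
      · have hπy : 0 < y * π := mul_pos h1 pi_pos
        have b1 := hδ'b _ hπy
        have b2 := hδb _ hπy
        rw [Real.norm_eq_abs, abs_mul, abs_mul, abs_mul, abs_two, abs_of_pos hπy]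
        have h2 : |δ' (y*π)| * |δ (y*π)| ≤ Mδ' * Mδ :=
          mul_le_mul b1 b2 (abs_nonneg _) hM'
        nlinarith [abs_nonneg (δ' (y*π)), abs_nonneg (δ (y*π)), hπy.le]
    refine squeeze_zero_norm' hb ?_
    have : Tendsto (fun y : ℝ => 2 * Mδ' * Mδ * (y * π)) (𝓝 0) (𝓝 0) := by
      have h : Tendsto (fun y : ℝ => 2 * Mδ' * Mδ * (y * π)) (𝓝 0) (𝓝 (2 * Mδ' * Mδ * (0 * π))) :=
        ((continuous_const.mul (continuous_mul_right π)).tendsto (0:ℝ))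
      simpa using h
    exact this.mono_left nhdsWithin_le_nhds
  · exact (((continuousAt_const.mul (contAt_comp' hc h0)).mul (contAt_comp hd1 h0)).mul
      (continuous_mul_right π).continuousAt).continuousWithinAt

lemma cont_h (hd1 : ∀ x > (0:ℝ), HasDerivAt δ (δ' x) x)
    (hδb : ∀ x > (0:ℝ), |δ x| ≤ Mδ) :
    ContinuousOn (fun x => δ (x * π) ^ 2 * x) (Ici 0) := by
  have hM : 0 ≤ Mδ := le_trans (abs_nonneg _) (hδb 1 one_pos)
  intro x hx
  rcases eq_or_lt_of_le (Set.mem_Ici.mp hx) with h0 | h0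
  · subst h0
    unfold ContinuousWithinAt
    have hg0 : (fun x => δ (x * π) ^ 2 * x) 0 = 0 := by simp
    rw [hg0]
    have hb : ∀ᶠ y in 𝓝[Ici 0] (0:ℝ), ‖δ (y * π) ^ 2 * y‖ ≤ Mδ ^ 2 * y := by
      filter_upwards [eventually_mem_nhdsWithin] with y hy
      rcases eq_or_lt_of_le (Set.mem_Ici.mp hy) with h1 | h1
      · subst h1; simp
      · have hπy : 0 < y * π := mul_pos h1 pi_pos
        have b2 := hδb _ hπy
        rw [Real.norm_eq_abs, abs_mul, abs_of_pos h1, abs_pow]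
        have : |δ (y*π)| ^ 2 ≤ Mδ ^ 2 := pow_le_pow_left₀ (abs_nonneg _) b2 2
        nlinarith
    refine squeeze_zero_norm' hb ?_
    have : Tendsto (fun y : ℝ => Mδ ^ 2 * y) (𝓝 0) (𝓝 0) := by
      simpa using (show Tendsto (fun y : ℝ => Mδ^2 * y) (𝓝 0) (𝓝 (Mδ^2 * 0)) from (continuous_const.mul continuous_id).tendsto (0:ℝ))
    exact this.mono_left nhdsWithin_le_nhds
  · exact (((contAt_comp hd1 h0).pow 2).mul continuousAt_id).continuousWithinAt

lemma deriv_h (hd1 : ∀ x > (0:ℝ), HasDerivAt δ (δ' x) x) {x : ℝ} (hx : 0 < x) :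
    HasDerivAt (fun x => δ (x * π) ^ 2 * x)
      (2 * δ' (x * π) * δ (x * π) * (x * π) + δ (x * π) ^ 2) x := by
  have hπx : 0 < x * π := mul_pos hx pi_pos
  have hm : HasDerivAt (fun y : ℝ => y * π) π x := hasDerivAt_mul_const π
  have h1 : HasDerivAt (fun y => δ (y * π)) (δ' (x * π) * π) x := (hd1 _ hπx).comp x hm
  have h2 := (h1.fun_pow 2).fun_mul (hasDerivAt_id' x)
  refine h2.congr_deriv ?_
  push_cast
  ring

lemma int_f2 (hd1 : ∀ x > (0:ℝ), HasDerivAt δ (δ' x) x)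
    (hδb : ∀ x > (0:ℝ), |δ x| ≤ Mδ) {a : ℝ} (ha : 0 ≤ a) :
    IntervalIntegrable (fun x => δ (x * π) ^ 2) volume 0 a := by
  rw [intervalIntegrable_iff_integrableOn_Ioc_of_le ha]
  have hcont : ContinuousOn (fun x => δ (x * π) ^ 2) (Ioc 0 a) := fun x hx =>
    ((contAt_comp hd1 hx.1).pow 2).continuousWithinAt
  refine ⟨hcont.aestronglyMeasurable measurableSet_Ioc,
    HasFiniteIntegral.restrict_of_bounded (C := Mδ ^ 2) measure_Ioc_lt_top ?_⟩
  refine (ae_restrict_iff' measurableSet_Ioc).2 (ae_of_all _ fun x hx => ?_)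
  rw [Real.norm_eq_abs, abs_pow]
  exact pow_le_pow_left₀ (abs_nonneg _) (hδb _ (mul_pos hx.1 pi_pos)) 2

lemma int_g (hd1 : ∀ x > (0:ℝ), HasDerivAt δ (δ' x) x)
    (hc : ContinuousOn δ' (Set.Ioi 0))
    (hδb : ∀ x > (0:ℝ), |δ x| ≤ Mδ) (hδ'b : ∀ x > (0:ℝ), |δ' x| ≤ Mδ')
    {u v : ℝ} (hu : 0 ≤ u) (huv : u ≤ v) :
    IntervalIntegrable (gfun δ δ') volume u v := by
  apply ContinuousOn.intervalIntegrable
  apply (cont_g hd1 hc hδb hδ'b).mono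
  rw [uIcc_of_le huv]
  exact fun x hx => le_trans hu hx.1

lemma ftc (hd1 : ∀ x > (0:ℝ), HasDerivAt δ (δ' x) x)
    (hc : ContinuousOn δ' (Set.Ioi 0))
    (hδb : ∀ x > (0:ℝ), |δ x| ≤ Mδ) (hδ'b : ∀ x > (0:ℝ), |δ' x| ≤ Mδ')
    {a : ℝ} (ha : 0 ≤ a) :
    ∫ x in (0:ℝ)..a, δ (x * π) ^ 2
      = δ (a * π) ^ 2 * a - ∫ x in (0:ℝ)..a, gfun δ δ' x := by
  have hint : ∫ x in (0:ℝ)..a, (gfun δ δ' x + δ (x * π) ^ 2)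
      = δ (a * π) ^ 2 * a := by
    have := intervalIntegral.integral_eq_sub_of_hasDeriv_right_of_le ha
      ((cont_h hd1 hδb).mono (Icc_subset_Ici_self (a := a) (b := 0)))
      (fun x hx => (deriv_h hd1 hx.1).hasDerivWithinAt)
      ((int_g hd1 hc hδb hδ'b le_rfl ha).add (int_f2 hd1 hδb ha))
    simpa [gfun_apply] using this
  rw [intervalIntegral.integral_add (int_g hd1 hc hδb hδ'b le_rfl ha) (int_f2 hd1 hδb ha)] at hint
  linarith

end SDPDA


open SDPDA in
/-- Asymptotics of `Σ (2/L²)δ'(nπ/L)δ(nπ/L)(nπ/L)`: it equals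
`(1/(Lπ))(δ²(√E)√E − π∫_0^{N/L} δ²(xπ) dx)` up to `o(1/L)` as `N, L → ∞` with
`N/L → √E/π`. -/
theorem sum_delta_prime_delta_asymptotics (δ δ' : ℝ → ℝ) (E : ℝ) (hE : 0 < E)
    (Mδ Mδ' : ℝ)
    (hd1 : ∀ x > (0 : ℝ), HasDerivAt δ (δ' x) x)
    (hc : ContinuousOn δ' (Set.Ioi 0))
    (hδb : ∀ x > (0 : ℝ), |δ x| ≤ Mδ)
    (hδ'b : ∀ x > (0 : ℝ), |δ' x| ≤ Mδ')
    (N : ℕ → ℕ) (L : ℕ → ℝ)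
    (hN : Tendsto N atTop atTop) (hL : Tendsto L atTop atTop)
    (hNL : Tendsto (fun j => (N j : ℝ) / L j) atTop (𝓝 (Real.sqrt E / π))) :
    Tendsto (fun j => L j *
        (∑ n ∈ Finset.Icc 1 (N j),
            (2 / (L j) ^ 2) * δ' ((n : ℝ) * π / L j) * δ ((n : ℝ) * π / L j) * ((n : ℝ) * π / L j)
          - (1 / (L j * π)) * (δ (Real.sqrt E) ^ 2 * Real.sqrt E
            - π * ∫ x in (0 : ℝ)..((N j : ℝ) / L j), δ (x * π) ^ 2)))
      atTop (𝓝 0) := by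
  classical
  have hE' : 0 < Real.sqrt E := Real.sqrt_pos.2 hE
  -- the boundary term tends to 0
  have hC : Tendsto (fun j => δ ((N j : ℝ) / L j * π) ^ 2 * ((N j : ℝ) / L j)
      - δ (Real.sqrt E) ^ 2 * Real.sqrt E / π) atTop (𝓝 0) := by
    have h1 : Tendsto (fun j => (N j : ℝ) / L j * π) atTop (𝓝 (Real.sqrt E)) := by
      have := hNL.mul_const π
      rwa [div_mul_cancel₀ _ (pi_ne_zero)] at this
    have h2 : Tendsto (fun j => δ ((N j : ℝ) / L j * π)) atTop (𝓝 (δ (Real.sqrt E))) :=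
      ((hd1 _ hE').continuousAt.tendsto).comp h1
    have h3 := ((h2.pow 2).mul hNL).sub_const (δ (Real.sqrt E) ^ 2 * Real.sqrt E / π)
    convert h3 using 2
    ring
  -- the Riemann sum error tends to 0
  have hR : Tendsto (fun j => (∑ n ∈ Finset.Icc 1 (N j), (1 / L j) * gfun δ δ' ((n : ℝ) / L j))
      - ∫ x in (0:ℝ)..((N j : ℝ) / L j), gfun δ δ' x) atTop (𝓝 0) := by
    rw [NormedAddCommGroup.tendsto_nhds_zero]
    intro ε hε
    set A : ℝ := Real.sqrt E / π + 1 with hAdef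
    have hA0 : 0 < A := by positivity
    set ε' : ℝ := ε / (A + 1) with hε'def
    have hε' : 0 < ε' := by positivity
    have hu := (isCompact_Icc : IsCompact (Icc (0:ℝ) A)).uniformContinuousOn_of_continuous
      ((cont_g hd1 hc hδb hδ'b).mono Icc_subset_Ici_self)
    obtain ⟨d, hd0, hdu⟩ := Metric.uniformContinuousOn_iff.1 hu ε' hε'
    have ev1 : ∀ᶠ j in atTop, (N j : ℝ) / L j < A :=
      hNL.eventually_lt_const (by linarith)
    have ev2 : ∀ᶠ j in atTop, max 1 (1/d) < L j := hL.eventually_gt_atTop _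
    filter_upwards [ev1, ev2] with j hjA hjL
    have hl0 : (0:ℝ) < L j := lt_of_lt_of_le one_pos (le_of_lt (lt_of_le_of_lt (le_max_left _ _) hjL))
    have hld : 1 / L j < d := by
      have h1 : 1 / d < L j := lt_of_le_of_lt (le_max_right _ _) hjL
      rw [div_lt_iff₀ hl0]
      rw [div_lt_iff₀ hd0] at h1
      nlinarith
    -- rewrite the sum over range
    have hsum : (∑ n ∈ Finset.Icc 1 (N j), (1 / L j) * gfun δ δ' ((n : ℝ) / L j))
        = ∑ i ∈ Finset.range (N j), (1 / L j) * gfun δ δ' (((i : ℝ) + 1) / L j) := by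
      rw [← Finset.Ico_add_one_right_eq_Icc, Finset.sum_Ico_eq_sum_range]
      try simp only [Nat.add_sub_cancel]
      refine Finset.sum_congr rfl fun i _ => ?_
      have : ((1 + i : ℕ) : ℝ) = (i : ℝ) + 1 := by push_cast; ring
      rw [this]
    -- split the integral
    have hiint : ∀ k : ℕ, k < N j → IntervalIntegrable (gfun δ δ') volume ((k : ℝ) / L j) ((k + 1 : ℕ) / L j) := by
      intro k _
      have h1 : (0:ℝ) ≤ (k : ℝ) / L j := by positivity
      have h2 : (k : ℝ) / L j ≤ ((k + 1 : ℕ) : ℝ) / L j := by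
        apply div_le_div_of_nonneg_right ?_ hl0.le  -- a ≤ b → 0 < c → a/c ≤ b/c
        push_cast; linarith
      exact int_g hd1 hc hδb hδ'b h1 h2
    have hintsplit : ∫ x in (0:ℝ)..((N j : ℝ) / L j), gfun δ δ' x
        = ∑ i ∈ Finset.range (N j), ∫ x in ((i : ℝ) / L j)..(((i : ℝ) + 1) / L j), gfun δ δ' x := by
      have := intervalIntegral.sum_integral_adjacent_intervals
        (a := fun k : ℕ => (k : ℝ) / L j) (n := N j) (fun k hk => by
          simpa using hiint k hk)
      simp only [Nat.cast_zero, zero_div, Nat.cast_add, Nat.cast_one] at this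
      exact this.symm
    rw [hsum, hintsplit, ← Finset.sum_sub_distrib]
    -- bound each term
    have hterm : ∀ i ∈ Finset.range (N j),
        ‖(1 / L j) * gfun δ δ' (((i : ℝ) + 1) / L j)
          - ∫ x in ((i : ℝ) / L j)..(((i : ℝ) + 1) / L j), gfun δ δ' x‖ ≤ ε' * (1 / L j) := by
      intro i hi
      have hiN : i + 1 ≤ N j := Finset.mem_range.1 hi
      have hIi : IntervalIntegrable (gfun δ δ') volume ((i : ℝ) / L j) (((i : ℝ) + 1) / L j) := by
        have := hiint i (Finset.mem_range.1 hi)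
        rwa [show (((i + 1 : ℕ)) : ℝ) = (i : ℝ) + 1 by push_cast; ring] at this
      have hconst : (1 / L j) * gfun δ δ' (((i : ℝ) + 1) / L j)
          = ∫ x in ((i : ℝ) / L j)..(((i : ℝ) + 1) / L j), gfun δ δ' (((i : ℝ) + 1) / L j) := by
        rw [intervalIntegral.integral_const, smul_eq_mul]
        congr 1
        field_simp
        ring
      rw [hconst, ← intervalIntegral.integral_sub intervalIntegrable_const hIi]
      have hbd : ∀ x ∈ Set.uIoc ((i : ℝ) / L j) (((i : ℝ) + 1) / L j),
          ‖gfun δ δ' (((i : ℝ) + 1) / L j) - gfun δ δ' x‖ ≤ ε' := by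
        intro x hx
        have hle : (i : ℝ) / L j ≤ ((i : ℝ) + 1) / L j := by
          apply div_le_div_of_nonneg_right ?_ hl0.le
          linarith
        rw [uIoc_of_le hle] at hx
        have hx1 : (0:ℝ) ≤ (i : ℝ) / L j := by positivity
        have hub : ((i : ℝ) + 1) / L j ≤ A := by
          have h1 : ((i : ℝ) + 1) / L j ≤ (N j : ℝ) / L j := by
            apply div_le_div_of_nonneg_right ?_ hl0.le
            exact_mod_cast hiN
          linarith
        have hxK : x ∈ Icc (0:ℝ) A := ⟨le_trans hx1 hx.1.le, le_trans hx.2 hub⟩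
        have hyK : ((i : ℝ) + 1) / L j ∈ Icc (0:ℝ) A := ⟨by positivity, hub⟩
        have hdist : dist (((i : ℝ) + 1) / L j) x < d := by
          rw [Real.dist_eq, abs_of_nonneg (by linarith [hx.2] : (0:ℝ) ≤ ((i : ℝ) + 1) / L j - x)]
          have : ((i : ℝ) + 1) / L j - (i : ℝ) / L j = 1 / L j := by field_simp; ring
          linarith [hx.1, hld]
        have := hdu _ hyK _ hxK hdist
        rw [dist_eq_norm] at this
        exact this.le
      have := intervalIntegral.norm_integral_le_of_norm_le_const hbd
      have habs : |((i : ℝ) + 1) / L j - (i : ℝ) / L j| = 1 / L j := by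
        rw [show ((i : ℝ) + 1) / L j - (i : ℝ) / L j = 1 / L j by field_simp; ring]
        exact abs_of_pos (by positivity)
      rwa [habs] at this
    calc ‖∑ i ∈ Finset.range (N j), ((1 / L j) * gfun δ δ' (((i : ℝ) + 1) / L j)
            - ∫ x in ((i : ℝ) / L j)..(((i : ℝ) + 1) / L j), gfun δ δ' x)‖
        ≤ ∑ i ∈ Finset.range (N j), ‖(1 / L j) * gfun δ δ' (((i : ℝ) + 1) / L j)
            - ∫ x in ((i : ℝ) / L j)..(((i : ℝ) + 1) / L j), gfun δ δ' x‖ := norm_sum_le _ _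
      _ ≤ ∑ i ∈ Finset.range (N j), ε' * (1 / L j) := Finset.sum_le_sum hterm
      _ = (N j : ℝ) * (ε' * (1 / L j)) := by
          rw [Finset.sum_const, Finset.card_range, nsmul_eq_mul]
      _ = (N j : ℝ) / L j * ε' := by ring
      _ ≤ A * ε' := by nlinarith [hε'.le, (by positivity : (0:ℝ) ≤ (N j : ℝ) / L j)]
      _ < ε := by
          rw [hε'def, mul_comm, div_mul_eq_mul_div, div_lt_iff₀ (by linarith : (0:ℝ) < A + 1)]
          nlinarith
  -- combine
  have heq : (fun j => ((∑ n ∈ Finset.Icc 1 (N j), (1 / L j) * gfun δ δ' ((n : ℝ) / L j))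
        - ∫ x in (0:ℝ)..((N j : ℝ) / L j), gfun δ δ' x)
        + (δ ((N j : ℝ) / L j * π) ^ 2 * ((N j : ℝ) / L j)
          - δ (Real.sqrt E) ^ 2 * Real.sqrt E / π))
      =ᶠ[atTop] (fun j => L j *
        (∑ n ∈ Finset.Icc 1 (N j),
            (2 / (L j) ^ 2) * δ' ((n : ℝ) * π / L j) * δ ((n : ℝ) * π / L j) * ((n : ℝ) * π / L j)
          - (1 / (L j * π)) * (δ (Real.sqrt E) ^ 2 * Real.sqrt E
            - π * ∫ x in (0 : ℝ)..((N j : ℝ) / L j), δ (x * π) ^ 2))) := by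
    filter_upwards [hL.eventually_ge_atTop 1] with j hj
    have hl0 : (0:ℝ) < L j := lt_of_lt_of_le one_pos hj
    have ha0 : (0:ℝ) ≤ (N j : ℝ) / L j := by positivity
    rw [ftc hd1 hc hδb hδ'b ha0]
    have e1 : (∑ n ∈ Finset.Icc 1 (N j),
          (2 / (L j) ^ 2) * δ' ((n : ℝ) * π / L j) * δ ((n : ℝ) * π / L j) * ((n : ℝ) * π / L j))
        = (1 / L j) * ∑ n ∈ Finset.Icc 1 (N j), (1 / L j) * gfun δ δ' ((n : ℝ) / L j) := by
      rw [Finset.mul_sum]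
      refine Finset.sum_congr rfl fun n _ => ?_
      have hx : (n : ℝ) * π / L j = (n : ℝ) / L j * π := by ring
      simp only [gfun_apply]
      rw [hx]
      ring
    rw [e1]
    have key : ∀ (S I H T l : ℝ), 0 < l →
        l * (1 / l * S - 1 / (l * π) * (T - π * (H - I))) = S - I + (H - T / π) := by
      intro S I H T l hl
      field_simp
      ring
    exact (key _ _ _ _ _ hl0).symm
  refine Tendsto.congr' heq ?_
  have h2 := hR.add hC
  rw [add_zero] at h2
  exact h2
end
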